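/- Let (Wᵢ(s))_{i=1}^m be positive reals and (Wᵢ(s+1))_{i=1}^m nonnegative reals, and let J(s), J(s+1) be reals with λ₁ ≥ 0. If J(s+1) + ∑ᵢ λ₁·Wᵢ(s+1)²/(2Wᵢ(s)) ≤ J(s) + ∑ᵢ λ₁·Wᵢ(s)²/(2Wᵢ(s)), then J(s+1) + ∑ᵢ λ₁·Wᵢ(s+1) ≤ J(s) + ∑ᵢ λ₁·Wᵢ(s). -/
import Mathlib

theorem stmt_4 (m : ℕ) (Ws Ws1 : Fin m → ℝ) (Js Js1 lam1 : ℝ)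
    (hWs : ∀ i, 0 < Ws i) (hWs1 : ∀ i, 0 ≤ Ws1 i) (hlam : 0 ≤ lam1)
    (h : Js1 + ∑ i, lam1 * (Ws1 i) ^ 2 / (2 * Ws i)
        ≤ Js + ∑ i, lam1 * (Ws i) ^ 2 / (2 * Ws i)) :
    Js1 + ∑ i, lam1 * Ws1 i ≤ Js + ∑ i, lam1 * Ws i := by
  have key : ∑ i, (lam1 * Ws1 i - lam1 * (Ws1 i) ^ 2 / (2 * Ws i))
      ≤ ∑ i, (lam1 * Ws i - lam1 * (Ws i) ^ 2 / (2 * Ws i)) := by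
    apply Finset.sum_le_sum
    intro i _
    have ha := hWs i
    have hb := hWs1 i
    have h2a : (0:ℝ) < 2 * Ws i := by linarith
    have hsq : (Ws i - Ws1 i) ^ 2 ≥ 0 := sq_nonneg _
    have h1 : Ws1 i - (Ws1 i) ^ 2 / (2 * Ws i) ≤ Ws i - (Ws i) ^ 2 / (2 * Ws i) := by
      rw [sub_le_sub_iff, ← sub_nonneg]
      have e : Ws i + Ws1 i ^ 2 / (2 * Ws i) - (Ws1 i + Ws i ^ 2 / (2 * Ws i))
          = (Ws i - Ws1 i) ^ 2 / (2 * Ws i) := by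
        field_simp
        ring
      rw [e]
      positivity
    have := mul_le_mul_of_nonneg_left h1 hlam
    have e1 : lam1 * (Ws1 i - (Ws1 i) ^ 2 / (2 * Ws i))
        = lam1 * Ws1 i - lam1 * (Ws1 i) ^ 2 / (2 * Ws i) := by ring
    have e2 : lam1 * (Ws i - (Ws i) ^ 2 / (2 * Ws i))
        = lam1 * Ws i - lam1 * (Ws i) ^ 2 / (2 * Ws i) := by ring
    linarith [e1 ▸ e2 ▸ this]
  rw [Finset.sum_sub_distrib, Finset.sum_sub_distrib] at key
  linarith
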